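/- Let n ≥ 2k ≥ 4 and 4 ≤ b ≤ k+1. Let A = F([2,b]) ∪ F({1,b}) ⊆ C([n],k), where F([2,b]) = {S : s_j ≤ j+1 for all j ≤ b−1} and F({1,b}) = {S : s_1 = 1 and s_2 ≤ b}. Then |A| = C(n−1, k−1) − C(n−b, k−1) + C(n−b, k−b+1). -/

import Mathlib

/-- The `i`-th smallest element (0-indexed) of a finite set of naturals. -/
def nth (A : Finset ℕ) (i : ℕ) : ℕ := (Finset.sort A (· ≤ ·)).getD i 0

lemma nth_eq_get (S : Finset ℕ) {i : ℕ} (hi : i < S.card) :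
    nth S i = (Finset.sort S (· ≤ ·)).get ⟨i, by rwa [Finset.length_sort]⟩ :=
  List.getD_eq_getElem _ _ _

lemma nth_mem {S : Finset ℕ} {i : ℕ} (hi : i < S.card) : nth S i ∈ S := by
  rw [nth_eq_get S hi]
  exact (Finset.mem_sort _).1 (List.getElem_mem _)

lemma nth_lt_nth {S : Finset ℕ} {i j : ℕ} (hij : i < j) (hj : j < S.card) :
    nth S i < nth S j := by
  rw [nth_eq_get S (hij.trans hj), nth_eq_get S hj]
  exact S.sortedLT_sort.strictMono_get (Fin.mk_lt_mk.mpr hij)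

lemma nth_le_nth {S : Finset ℕ} {i j : ℕ} (hij : i ≤ j) (hj : j < S.card) :
    nth S i ≤ nth S j := by
  rcases hij.lt_or_eq with h | rfl
  · exact (nth_lt_nth h hj).le
  · rfl

lemma exists_nth {S : Finset ℕ} {x : ℕ} (hx : x ∈ S) : ∃ i < S.card, nth S i = x := by
  have h : x ∈ Finset.sort S (· ≤ ·) := (Finset.mem_sort _).2 hx
  obtain ⟨⟨i, hi⟩, hget⟩ := List.mem_iff_get.1 h
  have hi' : i < S.card := by rwa [Finset.length_sort] at hi
  exact ⟨i, hi', by rw [nth_eq_get S hi']; exact hget⟩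

lemma nth_zero_le {S : Finset ℕ} {x : ℕ} (hx : x ∈ S) : nth S 0 ≤ x := by
  obtain ⟨i, hi, rfl⟩ := exists_nth hx
  exact nth_le_nth (Nat.zero_le i) hi

lemma nth_two_add {S : Finset ℕ} (h2 : ∀ x ∈ S, 2 ≤ x) :
    ∀ j, j < S.card → j + 2 ≤ nth S j := by
  intro j
  induction j with
  | zero => intro hj; simpa using h2 _ (nth_mem hj)
  | succ j ih =>
      intro hj
      have h1 := ih (Nat.lt_of_succ_lt hj)
      have h2' : nth S j < nth S (j + 1) := nth_lt_nth (by omega) hj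
      show j + 1 + 2 ≤ nth S (j + 1)
      omega

lemma two_le_of_mem {n : ℕ} {S : Finset ℕ} (hS : S ⊆ Finset.Icc 1 n) (h1S : 1 ∉ S) :
    ∀ x ∈ S, 2 ≤ x := by
  intro x hx
  have h1 : 1 ≤ x := (Finset.mem_Icc.1 (hS hx)).1
  have hne : x ≠ 1 := fun e => h1S (e ▸ hx)
  omega

lemma key_iff {n k b : ℕ} (hk : 2 ≤ k) (hb : 4 ≤ b) (hbk : b ≤ k + 1) {S : Finset ℕ}
    (hS : S ⊆ Finset.Icc 1 n) (hcard : S.card = k) :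
    ((∀ j < b - 1, nth S j ≤ j + 2) ∨ (nth S 0 = 1 ∧ nth S 1 ≤ b)) ↔
      ((1 ∈ S ∧ (S ∩ Finset.Icc 2 b).Nonempty) ∨ (1 ∉ S ∧ Finset.Icc 2 b ⊆ S)) := by
  have hone : ∀ x ∈ S, 1 ≤ x := fun x hx => (Finset.mem_Icc.1 (hS hx)).1
  have h0k : 0 < S.card := by omega
  have h1k : 1 < S.card := by omega
  have hmem0 := nth_mem h0k
  have hmem1 := nth_mem h1k
  have h01 : nth S 0 < nth S 1 := nth_lt_nth Nat.zero_lt_one h1k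
  have hz : (nth S 0 = 1) ↔ 1 ∈ S := by
    constructor
    · intro h; rw [← h]; exact hmem0
    · intro h
      have hle := nth_zero_le h
      have hge := hone _ hmem0
      omega
  constructor
  · rintro (hC1 | ⟨h0, h1⟩)
    · by_cases h1S : 1 ∈ S
      · left
        refine ⟨h1S, ⟨nth S 1, Finset.mem_inter.2 ⟨hmem1, Finset.mem_Icc.2 ⟨?_, ?_⟩⟩⟩⟩
        · have := hz.2 h1S; omega
        · have := hC1 1 (by omega); omega
      · right
        refine ⟨h1S, fun v hv => ?_⟩
        rw [Finset.mem_Icc] at hv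
        have h2 := two_le_of_mem hS h1S
        have hv2 : v - 2 < b - 1 := by omega
        have hvk : v - 2 < S.card := by omega
        have hle := hC1 (v - 2) hv2
        have hge := nth_two_add h2 (v - 2) hvk
        have hvv : nth S (v - 2) = v := by omega
        rw [← hvv]; exact nth_mem hvk
    · left
      exact ⟨hz.1 h0, ⟨nth S 1, Finset.mem_inter.2 ⟨hmem1, Finset.mem_Icc.2 ⟨by omega, h1⟩⟩⟩⟩
  · rintro (⟨h1S, x, hx⟩ | ⟨h1S, hsub⟩)
    · right
      rw [Finset.mem_inter, Finset.mem_Icc] at hx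
      refine ⟨hz.2 h1S, ?_⟩
      obtain ⟨p, hp, hpx⟩ := exists_nth hx.1
      have hp0 : p ≠ 0 := by
        rintro rfl
        have := hz.2 h1S
        omega
      calc nth S 1 ≤ nth S p := nth_le_nth (by omega) hp
        _ ≤ b := by omega
    · left
      have h2 := two_le_of_mem hS h1S
      have claim : ∀ j, j < b - 1 → nth S j = j + 2 := by
        intro j
        induction j using Nat.strong_induction_on with
        | _ j ih =>
          intro hj
          have hjk : j < S.card := by omega
          have hmemv : (j + 2) ∈ S := hsub (Finset.mem_Icc.2 ⟨by omega, by omega⟩)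
          obtain ⟨p, hp, hpv⟩ := exists_nth hmemv
          have hpge := nth_two_add h2 p hp
          have hplej : p ≤ j := by omega
          rcases Nat.eq_or_lt_of_le hplej with rfl | hlt
          · exact hpv
          · exfalso
            have := ih p hlt (by omega)
            omega
      intro j hj
      exact (claim j hj).le

/-- |F([2,b]) ∪ F(1,b)| = C(n-1,k-1) - C(n-b,k-1) + C(n-b,k-b+1). -/
theorem stmt_14 (n k b : ℕ) (hn : 2 * k ≤ n) (hk : 2 ≤ k)
    (hb : 4 ≤ b) (hbk : b ≤ k + 1) :
    ((Finset.Icc 1 n).powerset.filter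
      (fun S => S.card = k ∧
        ((∀ j < b - 1, nth S j ≤ j + 2) ∨ (nth S 0 = 1 ∧ nth S 1 ≤ b)))).card
    = Nat.choose (n - 1) (k - 1) - Nat.choose (n - b) (k - 1)
        + Nat.choose (n - b) (k + 1 - b) := by
  classical
  have hbn : b ≤ n := by omega
  have hkn : k ≤ n := by omega
  set P := (Finset.Icc 1 n).powerset
  -- rewrite the predicate
  have hset : P.filter
      (fun S => S.card = k ∧
        ((∀ j < b - 1, nth S j ≤ j + 2) ∨ (nth S 0 = 1 ∧ nth S 1 ≤ b)))
      = P.filter (fun S => (S.card = k ∧ 1 ∈ S) ∧ (S ∩ Finset.Icc 2 b).Nonempty)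
        ∪ P.filter (fun S => S.card = k ∧ 1 ∉ S ∧ Finset.Icc 2 b ⊆ S) := by
    rw [← Finset.filter_or]
    apply Finset.filter_congr
    intro S hS
    rw [Finset.mem_powerset] at hS
    constructor
    · rintro ⟨hc, h⟩
      rcases (key_iff hk hb hbk hS hc).1 h with h' | h'
      · exact Or.inl ⟨⟨hc, h'.1⟩, h'.2⟩
      · exact Or.inr ⟨hc, h'⟩
    · rintro (⟨⟨hc, h1⟩, h2⟩ | ⟨hc, h1, h2⟩)
      · exact ⟨hc, (key_iff hk hb hbk hS hc).2 (Or.inl ⟨h1, h2⟩)⟩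
      · exact ⟨hc, (key_iff hk hb hbk hS hc).2 (Or.inr ⟨h1, h2⟩)⟩
  rw [hset]
  rw [Finset.card_union_of_disjoint]
  swap
  · rw [Finset.disjoint_left]
    intro S hS1 hS2
    rw [Finset.mem_filter] at hS1 hS2
    exact hS2.2.2.1 hS1.2.1.2
  -- cardinality of the second part
  have hA2 : (P.filter (fun S => S.card = k ∧ 1 ∉ S ∧ Finset.Icc 2 b ⊆ S)).card
      = Nat.choose (n - b) (k + 1 - b) := by
    have : (P.filter (fun S => S.card = k ∧ 1 ∉ S ∧ Finset.Icc 2 b ⊆ S)).card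
        = ((Finset.Icc (b + 1) n).powersetCard (k + 1 - b)).card := by
      apply Finset.card_nbij' (fun S => S \ Finset.Icc 2 b) (fun T => T ∪ Finset.Icc 2 b)
      · intro S hS
        rw [Finset.mem_coe, Finset.mem_filter, Finset.mem_powerset] at hS
        obtain ⟨hsub, hc, h1, hsub2⟩ := hS
        rw [Finset.mem_coe, Finset.mem_powersetCard]
        constructor
        · intro x hx
          rw [Finset.mem_sdiff, Finset.mem_Icc] at hx
          have hx1 := Finset.mem_Icc.1 (hsub hx.1)
          have hne : x ≠ 1 := fun e => h1 (e ▸ hx.1)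
          rw [Finset.mem_Icc]
          omega
        · rw [Finset.card_sdiff_of_subset hsub2, hc, Nat.card_Icc]
          omega
      · intro T hT
        rw [Finset.mem_coe, Finset.mem_powersetCard] at hT
        obtain ⟨hsub, hc⟩ := hT
        have hTge : ∀ x ∈ T, b + 1 ≤ x := fun x hx => (Finset.mem_Icc.1 (hsub hx)).1
        rw [Finset.mem_coe, Finset.mem_filter, Finset.mem_powerset]
        refine ⟨?_, ?_, ?_, Finset.subset_union_right⟩
        · intro x hx
          rw [Finset.mem_union] at hx
          rw [Finset.mem_Icc]
          rcases hx with hx | hx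
          · have := Finset.mem_Icc.1 (hsub hx); omega
          · have := Finset.mem_Icc.1 hx; omega
        · rw [Finset.card_union_of_disjoint, hc, Nat.card_Icc]
          · omega
          · rw [Finset.disjoint_left]
            intro x hx hx2
            have := hTge x hx
            have := Finset.mem_Icc.1 hx2
            omega
        · intro h1
          rw [Finset.mem_union, Finset.mem_Icc] at h1
          rcases h1 with h1 | h1
          · have := hTge 1 h1; omega
          · omega
      · intro S hS
        rw [Finset.mem_coe, Finset.mem_filter] at hS
        exact Finset.sdiff_union_of_subset hS.2.2.2
      · intro T hT
        rw [Finset.mem_coe, Finset.mem_powersetCard] at hT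
        apply Finset.union_sdiff_cancel_right
        rw [Finset.disjoint_left]
        intro x hx hx2
        have := (Finset.mem_Icc.1 (hT.1 hx)).1
        have := Finset.mem_Icc.1 hx2
        omega
    rw [this, Finset.card_powersetCard, Nat.card_Icc]
    congr 1 <;> omega
  -- first part: B minus B2'
  set B := P.filter (fun S => S.card = k ∧ 1 ∈ S) with hBdef
  have hsplit : (B.filter (fun S => (S ∩ Finset.Icc 2 b).Nonempty)).card
      + (B.filter (fun S => ¬(S ∩ Finset.Icc 2 b).Nonempty)).card = B.card :=
    Finset.card_filter_add_card_filter_not _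
  have hA1eq : P.filter (fun S => (S.card = k ∧ 1 ∈ S) ∧ (S ∩ Finset.Icc 2 b).Nonempty)
      = B.filter (fun S => (S ∩ Finset.Icc 2 b).Nonempty) := by
    rw [hBdef, Finset.filter_filter]
  have hBcard : B.card = Nat.choose (n - 1) (k - 1) := by
    have : B.card = ((Finset.Icc 2 n).powersetCard (k - 1)).card := by
      apply Finset.card_nbij' (fun S => S.erase 1) (fun T => insert 1 T)
      · intro S hS
        rw [Finset.mem_coe, Finset.mem_filter, Finset.mem_powerset] at hS
        obtain ⟨hsub, hc, h1⟩ := hS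
        rw [Finset.mem_coe, Finset.mem_powersetCard]
        constructor
        · intro x hx
          rw [Finset.mem_erase] at hx
          have := Finset.mem_Icc.1 (hsub hx.2)
          rw [Finset.mem_Icc]
          omega
        · rw [Finset.card_erase_of_mem h1, hc]
      · intro T hT
        rw [Finset.mem_coe, Finset.mem_powersetCard] at hT
        obtain ⟨hsub, hc⟩ := hT
        have h1T : 1 ∉ T := fun h => by have := Finset.mem_Icc.1 (hsub h); omega
        rw [Finset.mem_coe, Finset.mem_filter, Finset.mem_powerset]
        refine ⟨?_, ?_, Finset.mem_insert_self 1 T⟩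
        · intro x hx
          rw [Finset.mem_insert] at hx
          rw [Finset.mem_Icc]
          rcases hx with rfl | hx
          · omega
          · have := Finset.mem_Icc.1 (hsub hx); omega
        · rw [Finset.card_insert_of_notMem h1T, hc]; omega
      · intro S hS
        rw [Finset.mem_coe, Finset.mem_filter] at hS
        exact Finset.insert_erase hS.2.2
      · intro T hT
        rw [Finset.mem_coe, Finset.mem_powersetCard] at hT
        apply Finset.erase_insert
        intro h
        have := Finset.mem_Icc.1 (hT.1 h)
        omega
    rw [this, Finset.card_powersetCard, Nat.card_Icc]
    congr 1 <;> omega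
  have hB2card : (B.filter (fun S => ¬(S ∩ Finset.Icc 2 b).Nonempty)).card
      = Nat.choose (n - b) (k - 1) := by
    have : (B.filter (fun S => ¬(S ∩ Finset.Icc 2 b).Nonempty)).card
        = ((Finset.Icc (b + 1) n).powersetCard (k - 1)).card := by
      apply Finset.card_nbij' (fun S => S.erase 1) (fun T => insert 1 T)
      · intro S hS
        rw [Finset.mem_coe, Finset.mem_filter, Finset.mem_filter, Finset.mem_powerset,
          Finset.not_nonempty_iff_eq_empty] at hS
        obtain ⟨⟨hsub, hc, h1⟩, hemp⟩ := hS
        rw [Finset.mem_coe, Finset.mem_powersetCard]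
        constructor
        · intro x hx
          rw [Finset.mem_erase] at hx
          have hx1 := Finset.mem_Icc.1 (hsub hx.2)
          have hnx : x ∉ Finset.Icc 2 b := by
            intro hmem
            have : x ∈ S ∩ Finset.Icc 2 b := Finset.mem_inter.2 ⟨hx.2, hmem⟩
            rw [hemp] at this
            exact absurd this (Finset.notMem_empty x)
          rw [Finset.mem_Icc] at hnx ⊢
          omega
        · rw [Finset.card_erase_of_mem h1, hc]
      · intro T hT
        rw [Finset.mem_coe, Finset.mem_powersetCard] at hT
        obtain ⟨hsub, hc⟩ := hT
        have hTge : ∀ x ∈ T, b + 1 ≤ x := fun x hx => (Finset.mem_Icc.1 (hsub hx)).1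
        have h1T : 1 ∉ T := fun h => by have := hTge 1 h; omega
        rw [Finset.mem_coe, Finset.mem_filter, Finset.mem_filter, Finset.mem_powerset,
          Finset.not_nonempty_iff_eq_empty]
        refine ⟨⟨?_, ?_, Finset.mem_insert_self 1 T⟩, ?_⟩
        · intro x hx
          rw [Finset.mem_insert] at hx
          rw [Finset.mem_Icc]
          rcases hx with rfl | hx
          · omega
          · have := Finset.mem_Icc.1 (hsub hx); omega
        · rw [Finset.card_insert_of_notMem h1T, hc]; omega
        · rw [Finset.eq_empty_iff_forall_notMem]
          intro x hx
          rw [Finset.mem_inter, Finset.mem_insert, Finset.mem_Icc] at hx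
          rcases hx.1 with rfl | hx1
          · omega
          · have := hTge x hx1; omega
      · intro S hS
        rw [Finset.mem_coe, Finset.mem_filter, Finset.mem_filter] at hS
        exact Finset.insert_erase hS.1.2.2
      · intro T hT
        rw [Finset.mem_coe, Finset.mem_powersetCard] at hT
        apply Finset.erase_insert
        intro h
        have := Finset.mem_Icc.1 (hT.1 h)
        omega
    rw [this, Finset.card_powersetCard, Nat.card_Icc]
    congr 1 <;> omega
  rw [hA1eq, hA2]
  omega
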